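/- Guarded string languages form a Kleene algebra with tests: the Kleene elements are sets of guarded strings with language concatenation (via partial guarded-string concatenation), union, Kleene star (iterated concatenation), the set of all single-atom strings as 1, and ∅ as 0; the tests are sets of atoms (as Boolean functions At → bool) with pointwise Boolean operations; a set of atoms a is embedded as the language of single-atom strings {α | α ∈ a}. -/

import Mathlib

structure IsKleeneAlgebra {X : Type*} (add mul : X → X → X) (star : X → X)
    (one zero : X) : Prop where
  add_assoc : ∀ x y z, add (add x y) z = add x (add y z)
  add_comm : ∀ x y, add x y = add y x
  add_idem : ∀ x, add x x = x
  add_zero : ∀ x, add x zero = x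
  mul_assoc : ∀ x y z, mul (mul x y) z = mul x (mul y z)
  one_mul : ∀ x, mul one x = x
  mul_one : ∀ x, mul x one = x
  zero_mul : ∀ x, mul zero x = zero
  mul_zero : ∀ x, mul x zero = zero
  left_distrib : ∀ x y z, mul x (add y z) = add (mul x y) (mul x z)
  right_distrib : ∀ x y z, mul (add x y) z = add (mul x z) (mul y z)
  star_unfold : ∀ x, add (add one (mul x (star x))) (star x) = star x
  star_ind_left : ∀ x y, add (mul y x) x = x → add (mul (star y) x) x = x
  star_ind_right : ∀ x y, add (mul x y) x = x → add (mul x (star y)) x = x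

structure IsBooleanAlgebra {B : Type*} (and or : B → B → B) (not : B → B)
    (top bot : B) : Prop where
  and_comm : ∀ a b, and a b = and b a
  or_comm : ∀ a b, or a b = or b a
  and_or_distrib : ∀ a b c, and a (or b c) = or (and a b) (and a c)
  or_and_distrib : ∀ a b c, or a (and b c) = and (or a b) (or a c)
  and_top : ∀ a, and a top = a
  or_bot : ∀ a, or a bot = a
  and_compl : ∀ a, and a (not a) = bot
  or_compl : ∀ a, or a (not a) = top

/-- Guarded strings: an atom followed by a list of (letter, atom) pairs. -/
def GString (At A : Type*) := At × List (A × At)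

def GString.lastAtom {At A : Type*} (u : GString At A) : At :=
  (u.2.map Prod.snd).getLastD u.1

/-- Partial concatenation of guarded strings. -/
def GString.cat {At A : Type*} [DecidableEq At] (u v : GString At A) :
    Option (GString At A) :=
  if u.lastAtom = v.1 then some (u.1, u.2 ++ v.2) else none

/-- Concatenation of guarded string languages. -/
def glangCat {At A : Type*} [DecidableEq At] (x y : Set (GString At A)) :
    Set (GString At A) :=
  {w | ∃ u ∈ x, ∃ v ∈ y, u.cat v = some w}

/-- The unit language: all single-atom strings. -/
def glangOne (At A : Type*) : Set (GString At A) := {u | u.2 = []}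

/-- n-fold concatenation of a guarded string language. -/
def glangPow {At A : Type*} [DecidableEq At] (x : Set (GString At A)) :
    ℕ → Set (GString At A)
  | 0 => glangOne At A
  | n + 1 => glangCat x (glangPow x n)

/-- Kleene star of a guarded string language: iterated concatenation. -/
def glangStar {At A : Type*} [DecidableEq At] (x : Set (GString At A)) :
    Set (GString At A) :=
  ⋃ n : ℕ, glangPow x n

/-- Embedding of a set of atoms as a language of single-atom strings. -/
def glangTest {At A : Type*} (a : At → Bool) : Set (GString At A) :=
  {u | u.2 = [] ∧ a u.1 = true}


section Aux

variable {At A : Type*}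

lemma getLastD_append (m1 m2 : List At) (d : At) :
    (m1 ++ m2).getLastD d = m2.getLastD (m1.getLastD d) := by
  induction m1 generalizing d with
  | nil => rfl
  | cons a t ih => rw [List.cons_append, List.getLastD_cons, List.getLastD_cons, ih]

lemma lastAtom_mk (α : At) (l : List (A × At)) :
    GString.lastAtom (At := At) (A := A) (α, l) = (l.map Prod.snd).getLastD α := rfl

lemma lastAtom_append (α : At) (l1 l2 : List (A × At)) :
    GString.lastAtom (At := At) (A := A) (α, l1 ++ l2)
      = GString.lastAtom (GString.lastAtom (At := At) (A := A) (α, l1), l2) := by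
  rw [lastAtom_mk, lastAtom_mk, lastAtom_mk, List.map_append, getLastD_append]

lemma lastAtom_eta (v : GString At A) :
    GString.lastAtom (At := At) (A := A) (v.1, v.2) = v.lastAtom := rfl

variable [DecidableEq At]

lemma cat_eq_some {u v w : GString At A} :
    u.cat v = some w ↔ u.lastAtom = v.1 ∧ w = (u.1, u.2 ++ v.2) := by
  unfold GString.cat
  split <;> simp_all [eq_comm] <;> exact Option.some_inj

lemma lastAtom_of_cat {u v w : GString At A} (h : u.cat v = some w) :
    w.lastAtom = v.lastAtom := by
  obtain ⟨h1, rfl⟩ := cat_eq_some.mp h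
  show GString.lastAtom (u.1, u.2 ++ v.2) = _
  rw [lastAtom_append, lastAtom_eta, h1, lastAtom_eta]

lemma glangCat_assoc (x y z : Set (GString At A)) :
    glangCat (glangCat x y) z = glangCat x (glangCat y z) := by
  ext w
  constructor
  · rintro ⟨p, ⟨u, hu, v, hv, huv⟩, q, hq, hpq⟩
    obtain ⟨h1, rfl⟩ := cat_eq_some.mp huv
    obtain ⟨h2, rfl⟩ := cat_eq_some.mp hpq
    have hlast : GString.lastAtom (At := At) (A := A) (u.1, u.2 ++ v.2) = v.lastAtom := by
      rw [lastAtom_append, lastAtom_eta, h1, lastAtom_eta]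
    refine ⟨u, hu, (v.1, v.2 ++ q.2), ⟨v, hv, q, hq, cat_eq_some.mpr ⟨by rw [← hlast]; exact h2, rfl⟩⟩, cat_eq_some.mpr ⟨h1, by simp; rfl⟩⟩
  · rintro ⟨u, hu, p, ⟨v, hv, q, hq, hvq⟩, hup⟩
    obtain ⟨h1, rfl⟩ := cat_eq_some.mp hvq
    obtain ⟨h2, rfl⟩ := cat_eq_some.mp hup
    have hlast : GString.lastAtom (At := At) (A := A) (u.1, u.2 ++ v.2) = v.lastAtom := by
      rw [lastAtom_append, lastAtom_eta, h2]; rfl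
    exact ⟨(u.1, u.2 ++ v.2), ⟨u, hu, v, hv, cat_eq_some.mpr ⟨h2, rfl⟩⟩, q, hq,
      cat_eq_some.mpr ⟨by rw [hlast]; exact h1, by simp; rfl⟩⟩

lemma glangCat_one (x : Set (GString At A)) : glangCat x (glangOne At A) = x := by
  ext w
  constructor
  · rintro ⟨u, hu, v, hv, huv⟩
    obtain ⟨h1, rfl⟩ := cat_eq_some.mp huv
    simpa [glangOne, Set.mem_setOf_eq] using by
      have : v.2 = [] := hv
      rw [this, List.append_nil]; exact hu
  · intro hw
    exact ⟨w, hw, (w.lastAtom, []), rfl, cat_eq_some.mpr ⟨rfl, by simp; rfl⟩⟩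

lemma glangOne_cat (x : Set (GString At A)) : glangCat (glangOne At A) x = x := by
  ext w
  constructor
  · rintro ⟨⟨α, l⟩, hu, v, hv, huv⟩
    obtain ⟨h1, rfl⟩ := cat_eq_some.mp huv
    have hu2 : l = [] := hu
    subst hu2
    have : GString.lastAtom (At := At) (A := A) (α, []) = α := rfl
    rw [this] at h1
    subst h1
    simp; exact hv
  · intro hw
    exact ⟨(w.1, []), rfl, w, hw, cat_eq_some.mpr ⟨rfl, rfl⟩⟩

lemma glangCat_mono {x x' y y' : Set (GString At A)} (hx : x ⊆ x') (hy : y ⊆ y') :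
    glangCat x y ⊆ glangCat x' y' := by
  rintro w ⟨u, hu, v, hv, huv⟩
  exact ⟨u, hx hu, v, hy hv, huv⟩

end Aux

/-- Guarded string languages form a Kleene algebra with tests. -/
theorem glang_isKAT (At A : Type*) [DecidableEq At] :
    IsKleeneAlgebra (X := Set (GString At A)) (· ∪ ·) glangCat glangStar
        (glangOne At A) ∅
    ∧ IsBooleanAlgebra (B := At → Bool)
        (fun a b α => a α && b α) (fun a b α => a α || b α) (fun a α => !a α)
        (fun _ => true) (fun _ => false)
    ∧ (∀ a b : At → Bool,
        glangTest (A := A) (fun α => a α && b α) = glangCat (glangTest a) (glangTest b))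
    ∧ (∀ a b : At → Bool,
        glangTest (A := A) (fun α => a α || b α) = glangTest a ∪ glangTest b)
    ∧ glangTest (A := A) (fun _ : At => true) = glangOne At A
    ∧ glangTest (A := A) (fun _ : At => false) = (∅ : Set (GString At A)) := by
  have pow_succ_right : ∀ (x : Set (GString At A)) n,
      glangPow x (n + 1) = glangCat (glangPow x n) x := by
    intro x n
    induction n with
    | zero =>
      show glangCat x (glangOne At A) = glangCat (glangOne At A) x
      rw [glangCat_one, glangOne_cat]
    | succ n ih =>
      show glangCat x (glangPow x (n+1)) = glangCat (glangCat x (glangPow x n)) x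
      rw [glangCat_assoc, ← ih]
  refine ⟨?_, ?_, ?_, ?_, ?_, ?_⟩
  · refine ⟨fun x y z => Set.union_assoc x y z, fun x y => Set.union_comm x y,
      fun x => Set.union_self x, fun x => Set.union_empty x,
      glangCat_assoc, glangOne_cat, glangCat_one, ?_, ?_, ?_, ?_, ?_, ?_, ?_⟩
    · intro x; ext w; constructor
      · rintro ⟨u, hu, -⟩; exact hu.elim
      · rintro ⟨⟩
    · intro x; ext w; constructor
      · rintro ⟨u, -, v, hv, -⟩; exact hv.elim
      · rintro ⟨⟩
    · intro x y z; ext w; constructor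
      · rintro ⟨u, hu, v, hv | hv, huv⟩
        · exact Or.inl ⟨u, hu, v, hv, huv⟩
        · exact Or.inr ⟨u, hu, v, hv, huv⟩
      · rintro (⟨u, hu, v, hv, huv⟩ | ⟨u, hu, v, hv, huv⟩)
        · exact ⟨u, hu, v, Or.inl hv, huv⟩
        · exact ⟨u, hu, v, Or.inr hv, huv⟩
    · intro x y z; ext w; constructor
      · rintro ⟨u, hu | hu, v, hv, huv⟩
        · exact Or.inl ⟨u, hu, v, hv, huv⟩
        · exact Or.inr ⟨u, hu, v, hv, huv⟩
      · rintro (⟨u, hu, v, hv, huv⟩ | ⟨u, hu, v, hv, huv⟩)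
        · exact ⟨u, Or.inl hu, v, hv, huv⟩
        · exact ⟨u, Or.inr hu, v, hv, huv⟩
    · -- star_unfold
      intro x
      rw [Set.union_eq_right]
      apply Set.union_subset
      · intro w hw
        exact Set.mem_iUnion.mpr ⟨0, hw⟩
      · rintro w ⟨u, hu, v, hv, huv⟩
        obtain ⟨n, hn⟩ := Set.mem_iUnion.mp hv
        exact Set.mem_iUnion.mpr ⟨n + 1, ⟨u, hu, v, hn, huv⟩⟩
    · -- star_ind_left
      intro x y h
      rw [Set.union_eq_right] at h ⊢
      have key : ∀ n, glangCat (glangPow y n) x ⊆ x := by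
        intro n
        induction n with
        | zero =>
          show glangCat (glangOne At A) x ⊆ x
          rw [glangOne_cat]
        | succ n ih =>
          show glangCat (glangCat y (glangPow y n)) x ⊆ x
          rw [glangCat_assoc]
          exact (glangCat_mono (subset_refl y) ih).trans h
      rintro w ⟨u, hu, v, hv, huv⟩
      obtain ⟨n, hn⟩ := Set.mem_iUnion.mp hu
      exact key n ⟨u, hn, v, hv, huv⟩
    · -- star_ind_right
      intro x y h
      rw [Set.union_eq_right] at h ⊢
      have key : ∀ n, glangCat x (glangPow y n) ⊆ x := by
        intro n
        induction n with
        | zero =>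
          show glangCat x (glangOne At A) ⊆ x
          rw [glangCat_one]
        | succ n ih =>
          rw [pow_succ_right, ← glangCat_assoc]
          exact (glangCat_mono ih (subset_refl y)).trans h
      rintro w ⟨u, hu, v, hv, huv⟩
      obtain ⟨n, hn⟩ := Set.mem_iUnion.mp hv
      exact key n ⟨u, hu, v, hn, huv⟩
  · exact ⟨fun a b => funext fun α => Bool.and_comm _ _,
      fun a b => funext fun α => Bool.or_comm _ _,
      fun a b c => funext fun α => by
        show (a α && (b α || c α)) = ((a α && b α) || (a α && c α))
        cases a α <;> cases b α <;> cases c α <;> rfl,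
      fun a b c => funext fun α => by
        show (a α || (b α && c α)) = ((a α || b α) && (a α || c α))
        cases a α <;> cases b α <;> cases c α <;> rfl,
      fun a => funext fun α => Bool.and_true _,
      fun a => funext fun α => Bool.or_false _,
      fun a => funext fun α => by
        show (a α && !a α) = false
        cases a α <;> rfl,
      fun a => funext fun α => by
        show (a α || !a α) = true
        cases a α <;> rfl⟩
  · intro a b
    ext ⟨α, l⟩
    constructor
    · rintro ⟨hl, hab⟩
      simp only at hl hab
      subst hl
      rw [Bool.and_eq_true] at hab
      exact ⟨(α, []), ⟨rfl, hab.1⟩, (α, []), ⟨rfl, hab.2⟩,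
        cat_eq_some.mpr ⟨rfl, rfl⟩⟩
    · rintro ⟨u, ⟨hu2, hua⟩, v, ⟨hv2, hvb⟩, huv⟩
      obtain ⟨h1, heq⟩ := cat_eq_some.mp huv
      obtain ⟨β, lu⟩ := u
      obtain ⟨γ, lv⟩ := v
      simp only at hu2 hv2 hua hvb
      subst hu2; subst hv2
      have hβγ : β = γ := h1
      cases heq
      subst hβγ
      exact ⟨rfl, by simp [hua, hvb]⟩
  · intro a b
    ext ⟨α, l⟩
    simp only [glangTest, Set.mem_setOf_eq, Set.mem_union, Bool.or_eq_true]
    show (l = [] ∧ (a α = true ∨ b α = true)) ↔ (l = [] ∧ a α = true) ∨ (l = [] ∧ b α = true)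
    tauto
  · ext ⟨α, l⟩
    simp [glangTest, glangOne]
  · ext ⟨α, l⟩
    simp [glangTest]
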